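/- If a graph G contains an edge e such that G - e has no cycle of length divisible by 3, then G is 3-colourable. -/

import Mathlib

open SimpleGraph

namespace Stmt16Aux

open Classical in
/-- all darts of the walk increase `f` by one -/
def PlusW {V : Type*} {H : SimpleGraph V} (f : V → ZMod 3) {a b : V} (W : H.Walk a b) : Prop :=
  ∀ d ∈ W.darts, f d.toProd.2 = f d.toProd.1 + 1

theorem plusW_length {V : Type*} {H : SimpleGraph V} (f : V → ZMod 3) :
    ∀ {a b : V} (W : H.Walk a b), PlusW f W → f b = f a + W.length := by
  intro a b W
  induction W with
  | nil => intro _; simp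
  | @cons u v w hadj p ih =>
    intro hp
    have h1 : f v = f u + 1 := hp ⟨(u, v), hadj⟩ (by simp [SimpleGraph.Walk.darts_cons])
    have h2 : f w = f v + p.length := ih (fun d hd => hp d (by simp [SimpleGraph.Walk.darts_cons, hd]))
    rw [h2, h1]
    push_cast [SimpleGraph.Walk.length_cons]
    ring

theorem plusW_closed_dvd {V : Type*} {H : SimpleGraph V} (f : V → ZMod 3) {u : V}
    (W : H.Walk u u) (hW : PlusW f W) : 3 ∣ W.length := by
  have := plusW_length f W hW
  have h0 : ((W.length : ℕ) : ZMod 3) = 0 := by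
    have := left_eq_add.mp this
    exact this
  exact (ZMod.natCast_eq_zero_iff _ _).mp h0

/-- no positive closed +1-walks, given no cycles of length divisible by 3 -/
theorem plusW_closed_nil {V : Type*} {H : SimpleGraph V}
    (NC : ∀ (v : V) (c : H.Walk v v), c.IsCycle → ¬ (3 ∣ c.length))
    (f : V → ZMod 3) : ∀ {u : V} (W : H.Walk u u), PlusW f W → W.length = 0 := by
  classical
  intro u W
  generalize hn : W.length = n
  induction n using Nat.strong_induction_on generalizing u W with
  | _ n ih =>
  intro hW
  subst hn
  have hdvd : 3 ∣ W.length := plusW_closed_dvd f W hW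
  rcases Nat.eq_zero_or_pos W.length with h0 | hpos
  · exact h0
  exfalso
  have hlen3 : 3 ≤ W.length := Nat.le_of_dvd hpos hdvd
  cases W with
  | nil => simp at hpos
  | @cons _ v _ hadj p =>
    have hWp : PlusW f p := fun d hd => hW d (by simp [SimpleGraph.Walk.darts_cons, hd])
    by_cases hnd : p.support.Nodup
    · -- it's a cycle
      have hpath : p.IsPath := SimpleGraph.Walk.IsPath.mk' hnd
      have hedge : s(u, v) ∉ p.edges := by
        intro hmem
        cases p with
        | nil => simp at hmem
        | @cons _ w _ h2 q =>
          rw [SimpleGraph.Walk.edges_cons, List.mem_cons] at hmem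
          rcases hmem with heq | hmem
          · -- s(u,v) = s(v,w) forces w = u, so q : Walk u u with nodup support
            have hw : w = u := by
              rw [Sym2.eq_iff] at heq
              rcases heq with ⟨h1, h2'⟩ | ⟨h1, h2'⟩
              · exact absurd h1 hadj.ne
              · exact h1.symm
            subst hw
            -- q : Walk u u with (cons h2 q).support nodup; so q is nil
            have hsup : (SimpleGraph.Walk.cons h2 q).support = v :: q.support :=
              SimpleGraph.Walk.support_cons _ _
            rw [hsup] at hnd
            have hqnd : q.support.Nodup := hnd.of_cons
            have : q.length = 0 := by
              cases q with
              | nil => rfl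
              | @cons _ z _ h3 r =>
                exfalso
                rw [SimpleGraph.Walk.support_cons] at hqnd
                exact (hqnd.notMem) (SimpleGraph.Walk.end_mem_support r)
            -- then total length is 2, contradicting hlen3
            have : (SimpleGraph.Walk.cons hadj (SimpleGraph.Walk.cons h2 q)).length = 2 := by
              simp [SimpleGraph.Walk.length_cons, this]
            omega
          · -- s(u,v) ∈ q.edges gives v ∈ q.support contradicting nodup
            have hv : v ∈ q.support := by
              have := SimpleGraph.Walk.fst_mem_support_of_mem_edges q (by rwa [Sym2.eq_swap] at hmem)
              exact this
            rw [SimpleGraph.Walk.support_cons] at hnd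
            exact hnd.notMem hv
      have hcyc : (SimpleGraph.Walk.cons hadj p).IsCycle :=
        (SimpleGraph.Walk.cons_isCycle_iff p hadj).mpr ⟨hpath, hedge⟩
      exact NC u _ hcyc hdvd
    · -- extract a shorter positive closed +1-walk
      obtain ⟨w, hwdup⟩ := by
        rw [List.nodup_iff_forall_not_duplicate] at hnd
        push_neg at hnd
        exact hnd
      have hwmem : w ∈ p.support := hwdup.mem
      set p1 := p.takeUntil w hwmem with hp1
      set p2 := p.dropUntil w hwmem with hp2
      have hspec : p1.append p2 = p := SimpleGraph.Walk.take_spec p hwmem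
      have hcount1 : p1.support.count w = 1 :=
        SimpleGraph.Walk.count_support_takeUntil_eq_one p hwmem
      have hcount2 : 2 ≤ p.support.count w := List.duplicate_iff_two_le_count.mp hwdup
      have hsupapp : p.support = p1.support ++ p2.support.tail := by
        rw [← hspec]; exact SimpleGraph.Walk.support_append _ _
      have hwtail : w ∈ p2.support.tail := by
        by_contra hc
        have : p.support.count w = p1.support.count w + p2.support.tail.count w := by
          rw [hsupapp, List.count_append]
        rw [hcount1, List.count_eq_zero_of_not_mem hc] at this
        omega
      -- p2 : Walk w u with w in its tail
      cases hp2' : p2 with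
      | nil => rw [hp2'] at hwtail; simp at hwtail
      | @cons _ z _ h4 r =>
        have hwr : w ∈ r.support := by
          rw [hp2'] at hwtail
          rw [SimpleGraph.Walk.support_cons] at hwtail
          exact hwtail
        set r1 := r.takeUntil w hwr with hr1
        set Q := SimpleGraph.Walk.cons h4 r1 with hQ
        have hQdarts : ∀ d ∈ Q.darts, d ∈ p.darts := by
          intro d hd
          rw [hQ, SimpleGraph.Walk.darts_cons] at hd
          have hp2darts : ∀ d' ∈ p2.darts, d' ∈ p.darts := by
            intro d' hd'
            rw [← hspec, SimpleGraph.Walk.darts_append, List.mem_append]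
            exact Or.inr hd'
          rcases List.mem_cons.mp hd with heq | hd'
          · apply hp2darts
            rw [hp2', SimpleGraph.Walk.darts_cons]
            exact List.mem_cons.mpr (Or.inl heq)
          · apply hp2darts
            rw [hp2', SimpleGraph.Walk.darts_cons]
            refine List.mem_cons.mpr (Or.inr ?_)
            have : r1.darts ⊆ r.darts := by
              rw [hr1]
              intro d'' hd''
              rw [← SimpleGraph.Walk.take_spec r hwr, SimpleGraph.Walk.darts_append,
                List.mem_append]
              exact Or.inl hd''
            exact this hd'
        have hQplus : PlusW f Q := fun d hd => hWp d (hQdarts d hd)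
        have hQlen : Q.length < (SimpleGraph.Walk.cons hadj p).length := by
          have h1 : r1.length ≤ r.length := SimpleGraph.Walk.length_takeUntil_le r hwr
          have h2 : p2.length ≤ p.length := by
            rw [← hspec, SimpleGraph.Walk.length_append]; omega
          have h3 : p2.length = r.length + 1 := by rw [hp2']; simp
          rw [hQ]
          simp only [SimpleGraph.Walk.length_cons]
          omega
        have := ih Q.length hQlen Q rfl hQplus
        rw [hQ] at this
        simp at this

def IsSink {V : Type*} (H : SimpleGraph V) (f : V → ZMod 3) (s : V) : Prop :=
  ∀ w, H.Adj s w → f w ≠ f s + 1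

theorem exists_sink {V : Type*} [Finite V] {H : SimpleGraph V}
    (NC : ∀ (v : V) (c : H.Walk v v), c.IsCycle → ¬ (3 ∣ c.length))
    (f : V → ZMod 3) (x₀ : V) : ∃ s, H.Reachable x₀ s ∧ IsSink H f s := by
  classical
  by_contra hc
  push_neg at hc
  have hc' : ∀ s : {s // H.Reachable x₀ s}, ∃ w, H.Adj s.1 w ∧ f w = f s.1 + 1 := by
    intro ⟨s, hs⟩
    have h1 := hc s hs
    unfold IsSink at h1
    push_neg at h1
    exact h1
  set Sub := {s // H.Reachable x₀ s} with hSub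
  choose nextv hadjv hcolv using hc'
  let next : Sub → Sub := fun s => ⟨nextv s, s.2.trans (hadjv s).reachable⟩
  have hnext_adj : ∀ s : Sub, H.Adj s.1 (next s).1 := fun s => hadjv s
  have hnext_col : ∀ s : Sub, f (next s).1 = f s.1 + 1 := fun s => hcolv s
  have walkN : ∀ (n : ℕ) (s : Sub), ∃ W : H.Walk s.1 ((next^[n]) s).1, PlusW f W ∧ W.length = n := by
    intro n
    induction n with
    | zero => intro s; exact ⟨SimpleGraph.Walk.nil, by intro d hd; simp at hd, rfl⟩
    | succ n ih =>
      intro s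
      obtain ⟨W', hW'p, hW'l⟩ := ih (next s)
      refine ⟨(SimpleGraph.Walk.cons (hnext_adj s) W').copy rfl
        (by rw [Function.iterate_succ_apply]), ?_, ?_⟩
      · intro d hd
        rw [SimpleGraph.Walk.darts_copy, SimpleGraph.Walk.darts_cons] at hd
        rcases List.mem_cons.mp hd with heq | hd'
        · subst heq; exact hnext_col s
        · exact hW'p d hd'
      · rw [SimpleGraph.Walk.length_copy]
        simp [hW'l]
  have base : Sub := ⟨x₀, SimpleGraph.Reachable.refl x₀⟩
  obtain ⟨i, j, hij, heq⟩ : ∃ i j : ℕ, i < j ∧ (next^[i]) base = (next^[j]) base := by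
    obtain ⟨i, j, hne, heq⟩ := Finite.exists_ne_map_eq_of_infinite (fun n : ℕ => (next^[n]) base)
    rcases hne.lt_or_gt with h | h
    · exact ⟨i, j, h, heq⟩
    · exact ⟨j, i, h, heq.symm⟩
  obtain ⟨W, hWp, hWl⟩ := walkN (j - i) ((next^[i]) base)
  have hend : ((next^[j-i]) ((next^[i]) base)).1 = ((next^[i]) base).1 := by
    rw [← Function.iterate_add_apply]
    rw [Nat.sub_add_cancel (le_of_lt hij)]
    rw [← heq]
  have h0 := plusW_closed_nil NC f (W.copy rfl hend) (by
    intro d hd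
    rw [SimpleGraph.Walk.darts_copy] at hd
    exact hWp d hd)
  rw [SimpleGraph.Walk.length_copy, hWl] at h0
  omega

open Classical in
noncomputable def Flip {V : Type*} (f : V → ZMod 3) (s : V) : V → ZMod 3 :=
  Function.update f s (f s + 1)

theorem flip_same {V : Type*} (f : V → ZMod 3) (s : V) : Flip f s s = f s + 1 := by
  classical
  simp [Flip, Function.update_self]

theorem flip_noteq {V : Type*} (f : V → ZMod 3) (s v : V) (h : v ≠ s) : Flip f s v = f v := by
  classical
  simp [Flip, Function.update_of_ne h]

def StepR {V : Type*} (H : SimpleGraph V) (A : Set V) (x₀ : V) (g g' : V → ZMod 3) : Prop :=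
  ∃ s, H.Reachable x₀ s ∧ s ∉ A ∧ IsSink H g s ∧ g' = Flip g s

def ReachR {V : Type*} (H : SimpleGraph V) (A : Set V) (x₀ : V) (f₀ g : V → ZMod 3) : Prop :=
  Relation.ReflTransGen (StepR H A x₀) f₀ g

theorem zmod3_cases : ∀ a b : ZMod 3, a = b ∨ a = b + 1 ∨ a = b + 2 := by decide

theorem zmod3_ne1 : ∀ c : ZMod 3, c + 1 ≠ c + 2 := by decide

theorem zmod3_ne0 : ∀ c : ZMod 3, c + 1 ≠ c := by decide

theorem inv_step {V : Type*} {H : SimpleGraph V} {A : Set V} {x₀ : V} {f₀ g g' : V → ZMod 3}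
    (hA : ∀ v w, H.Adj v w → f₀ v = f₀ w → v ∈ A)
    (hstep : StepR H A x₀ g g')
    (hagree : ∀ v, (v ∈ A ∨ ¬H.Reachable x₀ v) → g v = f₀ v)
    (hmono : ∀ v w, H.Adj v w → (g v = g w ↔ f₀ v = f₀ w)) :
    (∀ v, (v ∈ A ∨ ¬H.Reachable x₀ v) → g' v = f₀ v) ∧
      (∀ v w, H.Adj v w → (g' v = g' w ↔ f₀ v = f₀ w)) := by
  obtain ⟨s, hrs, hsA, hsink, rfl⟩ := hstep
  constructor
  · intro v hv
    have hvs : v ≠ s := by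
      rcases hv with hv | hv
      · exact fun he => hsA (he ▸ hv)
      · exact fun he => hv (he ▸ hrs)
    rw [flip_noteq _ _ _ hvs]
    exact hagree v hv
  · intro v w hadj
    by_cases hvs : v = s
    · subst hvs
      have hws : w ≠ v := fun he => H.irrefl (he ▸ hadj)
      rw [flip_same, flip_noteq _ _ _ hws]
      have hf0 : ¬ f₀ v = f₀ w := fun he => hsA (hA v w hadj he)
      have hgne : g v ≠ g w := fun he => hf0 ((hmono v w hadj).mp he)
      have hgsink : g w ≠ g v + 1 := hsink w hadj
      have hgw : g w = g v + 2 := by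
        rcases zmod3_cases (g w) (g v) with h | h | h
        · exact absurd h hgne.symm
        · exact absurd h hgsink
        · exact h
      constructor
      · intro he; rw [hgw] at he; exact absurd he (zmod3_ne1 (g v))
      · intro he; exact absurd he hf0
    · by_cases hws : w = s
      · subst hws
        rw [flip_same, flip_noteq _ _ _ hvs]

        have hadj' : H.Adj w v := hadj.symm
        have hf0 : ¬ f₀ v = f₀ w := fun he => hsA (hA w v hadj' he.symm)
        have hgne : g v ≠ g w := fun he => hf0 ((hmono v w hadj).mp he)
        have hgsink : g v ≠ g w + 1 := hsink v hadj'
        have hgv : g v = g w + 2 := by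
          rcases zmod3_cases (g v) (g w) with h | h | h
          · exact absurd h hgne
          · exact absurd h hgsink
          · exact h
        constructor
        · intro he; rw [hgv] at he; exact absurd he.symm (zmod3_ne1 (g w))
        · intro he; exact absurd he hf0
      · rw [flip_noteq _ _ _ hvs, flip_noteq _ _ _ hws]
        exact hmono v w hadj

theorem inv_of_reach {V : Type*} {H : SimpleGraph V} {A : Set V} {x₀ : V} {f₀ g : V → ZMod 3}
    (hA : ∀ v w, H.Adj v w → f₀ v = f₀ w → v ∈ A)
    (hre : ReachR H A x₀ f₀ g) :
    (∀ v, (v ∈ A ∨ ¬H.Reachable x₀ v) → g v = f₀ v) ∧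
      (∀ v w, H.Adj v w → (g v = g w ↔ f₀ v = f₀ w)) := by
  induction hre with
  | refl => exact ⟨fun v _ => rfl, fun v w _ => Iff.rfl⟩
  | tail hre hstep ih => exact inv_step hA hstep ih.1 ih.2

theorem run_reaches {V : Type*} [Finite V] {H : SimpleGraph V}
    (NC : ∀ (v : V) (c : H.Walk v v), c.IsCycle → ¬ (3 ∣ c.length))
    (f₀ : V → ZMod 3) (A : Set V) (x₀ : V) (hx₀ : x₀ ∈ A)
    (hA : ∀ v w, H.Adj v w → f₀ v = f₀ w → v ∈ A) :
    ∃ g a, ReachR H A x₀ f₀ g ∧ a ∈ A ∧ IsSink H g a := by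
  classical
  by_contra hcon
  push_neg at hcon
  -- from any reachable state we can take a step
  have stepex : ∀ g : {g // ReachR H A x₀ f₀ g}, ∃ s, H.Reachable x₀ s ∧ s ∉ A ∧ IsSink H g.1 s := by
    intro ⟨g, hg⟩
    obtain ⟨s, hrs, hsink⟩ := exists_sink NC g x₀
    refine ⟨s, hrs, fun hsA => ?_, hsink⟩
    exact hcon g s hg hsA hsink
  choose sv hsv1 hsv2 hsv3 using stepex
  let Sub := {g // ReachR H A x₀ f₀ g}
  let T : Sub → Sub := fun g =>
    ⟨Flip g.1 (sv g), g.2.tail ⟨sv g, hsv1 g, hsv2 g, hsv3 g, rfl⟩⟩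
  let base : Sub := ⟨f₀, Relation.ReflTransGen.refl⟩
  let R : ℕ → Sub := fun n => T^[n] base
  let flp : ℕ → V := fun n => sv (R n)
  have hRsucc : ∀ n, (R (n+1)).1 = Flip (R n).1 (flp n) := by
    intro n
    show (T^[n+1] base).1 = _
    rw [Function.iterate_succ_apply']
  have hflip_sink : ∀ n, IsSink H (R n).1 (flp n) := fun n => hsv3 (R n)
  have hflip_notA : ∀ n, flp n ∉ A := fun n => hsv2 (R n)
  have hflip_reach : ∀ n, H.Reachable x₀ (flp n) := fun n => hsv1 (R n)
  -- pigeonhole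
  obtain ⟨i, j, hij, heqR⟩ : ∃ i j : ℕ, i < j ∧ (R i).1 = (R j).1 := by
    obtain ⟨a, b, hne, he⟩ := Finite.exists_ne_map_eq_of_infinite (fun n : ℕ => (R n).1)
    rcases hne.lt_or_gt with h | h
    · exact ⟨a, b, h, he⟩
    · exact ⟨b, a, h, he.symm⟩
  -- counting flips
  let Ncnt : V → ℕ → ℕ := fun v m => ∑ t ∈ Finset.Ico i m, if flp t = v then 1 else 0
  have hcol : ∀ (v : V) (k : ℕ), (R (i+k)).1 v = (R i).1 v + (Ncnt v (i+k) : ZMod 3) := by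
    intro v k
    induction k with
    | zero => simp [Ncnt]
    | succ k ih =>
      have hsum : Ncnt v (i+k+1) = Ncnt v (i+k) + (if flp (i+k) = v then 1 else 0) :=
        Finset.sum_Ico_succ_top (Nat.le_add_right i k) _
      have hstep : (R (i+k+1)).1 v = (R (i+k)).1 v + (if flp (i+k) = v then 1 else 0) := by
        rw [hRsucc (i+k)]
        by_cases hfv : flp (i+k) = v
        · rw [if_pos hfv, ← hfv, flip_same]
        · rw [if_neg hfv, flip_noteq _ _ _ (fun he => hfv he.symm), add_zero]
      show (R (i+k+1)).1 v = (R i).1 v + ((Ncnt v (i+k+1) : ℕ) : ZMod 3)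
      rw [hstep, ih, hsum]
      push_cast
      ring
  have hdvd3 : ∀ v, 3 ∣ Ncnt v j := by
    intro v
    have := hcol v (j - i)
    rw [Nat.add_sub_cancel' (le_of_lt hij)] at this
    rw [← heqR] at this
    exact (ZMod.natCast_eq_zero_iff _ _).mp (left_eq_add.mp this)
  -- positivity
  have hposflip : 0 < Ncnt (flp i) j := by
    have hmem : i ∈ Finset.Ico i j := Finset.mem_Ico.mpr ⟨le_refl i, hij⟩
    have : (if flp i = flp i then 1 else 0) ≤ Ncnt (flp i) j :=
      Finset.single_le_sum (f := fun t => if flp t = flp i then (1:ℕ) else 0)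
        (fun t _ => Nat.zero_le _) hmem
    exact (by simpa using this : 1 ≤ Ncnt (flp i) j)
  have hflipmem : ∀ v, 0 < Ncnt v j → ∃ t, i ≤ t ∧ t < j ∧ flp t = v := by
    intro v hv
    obtain ⟨t, ht, hne⟩ := Finset.exists_ne_zero_of_sum_ne_zero hv.ne'
    refine ⟨t, (Finset.mem_Ico.mp ht).1, (Finset.mem_Ico.mp ht).2, ?_⟩
    by_contra hc
    rw [if_neg hc] at hne
    exact hne rfl
  have hconst : ∀ v, (∀ t, i ≤ t → t < j → flp t ≠ v) → ∀ k, i ≤ k → k ≤ j →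
      (R k).1 v = (R i).1 v := by
    intro v hnf k hk1 hk2
    obtain ⟨d, rfl⟩ := Nat.exists_eq_add_of_le hk1
    clear hk1
    induction d with
    | zero => rfl
    | succ d ih =>
      have hle : i + d ≤ j := by omega
      have : (R (i+d+1)).1 v = (R (i+d)).1 v := by
        rw [hRsucc (i+d)]
        exact flip_noteq _ _ _ (fun he => hnf (i+d) (by omega) (by omega) he.symm)
      rw [show i + (d+1) = i + d + 1 from rfl, this]
      exact ih (by omega)
  -- propagation along an edge
  have hprop : ∀ u v, H.Adj u v → 0 < Ncnt u j → 0 < Ncnt v j := by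
    intro u v hadj hu
    by_contra hv
    have hv0 : Ncnt v j = 0 := by omega
    have hnfv : ∀ t, i ≤ t → t < j → flp t ≠ v := by
      intro t ht1 ht2 he
      have hmem : t ∈ Finset.Ico i j := Finset.mem_Ico.mpr ⟨ht1, ht2⟩
      have : (if flp t = v then 1 else 0) ≤ Ncnt v j :=
        Finset.single_le_sum (f := fun t => if flp t = v then (1:ℕ) else 0)
          (fun t _ => Nat.zero_le _) hmem
      rw [if_pos he, hv0] at this
      omega
    -- u is flipped at least twice
    have hcard : Ncnt u j = ((Finset.Ico i j).filter (fun t => flp t = u)).card := by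
      rw [Finset.card_filter]
    have hge2 : 2 ≤ ((Finset.Ico i j).filter (fun t => flp t = u)).card := by
      have h3 := hdvd3 u
      rw [hcard] at h3 hu
      omega
    set S := (Finset.Ico i j).filter (fun t => flp t = u) with hS
    have hSne : S.Nonempty := Finset.card_pos.mp (by omega)
    set t1 := S.min' hSne with ht1def
    have ht1S : t1 ∈ S := S.min'_mem hSne
    have hSe : (S.erase t1).Nonempty := by
      rw [← Finset.card_pos, Finset.card_erase_of_mem ht1S]
      omega
    set t2 := (S.erase t1).min' hSe with ht2def
    have ht2S' : t2 ∈ S.erase t1 := (S.erase t1).min'_mem hSe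
    have ht2S : t2 ∈ S := Finset.mem_of_mem_erase ht2S'
    have ht1t2 : t1 < t2 :=
      lt_of_le_of_ne (S.min'_le t2 ht2S) (Ne.symm (Finset.ne_of_mem_erase ht2S'))
    have hmemIco : ∀ t ∈ S, i ≤ t ∧ t < j ∧ flp t = u := by
      intro t ht
      rw [hS, Finset.mem_filter, Finset.mem_Ico] at ht
      exact ⟨ht.1.1, ht.1.2, ht.2⟩
    obtain ⟨ht1i, ht1j, ht1u⟩ := hmemIco t1 ht1S
    obtain ⟨ht2i, ht2j, ht2u⟩ := hmemIco t2 ht2S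
    have hbetween : ∀ t, t1 < t → t < t2 → flp t ≠ u := by
      intro t h1 h2 he
      have htS : t ∈ S := by
        rw [hS, Finset.mem_filter, Finset.mem_Ico]
        exact ⟨⟨by omega, by omega⟩, he⟩
      have : t2 ≤ t := (S.erase t1).min'_le t (Finset.mem_erase.mpr ⟨by omega, htS⟩)
      omega
    -- u's color at t1 and t2
    set c := (R t1).1 u with hc
    have h1 : (R (t1+1)).1 u = c + 1 := by
      rw [hRsucc t1, ← ht1u, flip_same, ht1u]
    have hconstu : ∀ d, t1 + 1 + d ≤ t2 → (R (t1+1+d)).1 u = c + 1 := by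
      intro d
      induction d with
      | zero => intro _; exact h1
      | succ d ih =>
        intro hle
        have : (R (t1+1+d+1)).1 u = (R (t1+1+d)).1 u := by
          rw [hRsucc (t1+1+d)]
          exact flip_noteq _ _ _
            (fun he => hbetween (t1+1+d) (by omega) (by omega) he.symm)
        rw [show t1+1+(d+1) = t1+1+d+1 from rfl, this]
        exact ih (by omega)
    have h2 : (R t2).1 u = c + 1 := by
      have := hconstu (t2 - (t1+1)) (by omega)
      rwa [show t1+1+(t2-(t1+1)) = t2 by omega] at this
    -- v's color is constant
    have hvc1 : (R t1).1 v = (R i).1 v := hconst v hnfv t1 ht1i (by omega)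
    have hvc2 : (R t2).1 v = (R i).1 v := hconst v hnfv t2 ht2i (by omega)
    set d0 := (R i).1 v with hd0
    -- sink facts
    have hsink1 : IsSink H (R t1).1 u := ht1u ▸ hflip_sink t1
    have hsink2 : IsSink H (R t2).1 u := ht2u ▸ hflip_sink t2
    have hne1 : d0 ≠ c + 1 := by
      have := hsink1 v hadj
      rw [hvc1] at this
      exact this
    have hne2 : d0 ≠ c + 2 := by
      have := hsink2 v hadj
      rw [hvc2, h2] at this
      intro he
      apply this
      rw [he]
      ring
    have hnotinA : u ∉ A := ht1u ▸ hflip_notA t1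
    have hne0 : d0 ≠ c := by
      have hinv := (inv_of_reach hA (R t1).2).2 u v hadj
      intro he
      have : f₀ u = f₀ v := hinv.mp (by rw [← hc, ← he, hvc1])
      exact hnotinA (hA u v hadj this)
    rcases zmod3_cases d0 c with h | h | h
    · exact hne0 h
    · exact hne1 h
    · exact hne2 h
  -- propagate along walks
  have hwalk : ∀ {a b : V} (W : H.Walk a b), 0 < Ncnt a j → 0 < Ncnt b j := by
    intro a b W
    induction W with
    | nil => exact id
    | cons hadj p ih => intro ha; exact ih (hprop _ _ hadj ha)
  -- x₀ gets positive count, contradiction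
  have hx₀pos : 0 < Ncnt x₀ j := by
    obtain ⟨W⟩ := hflip_reach i
    exact hwalk W.reverse hposflip
  have hx₀zero : Ncnt x₀ j = 0 := by
    apply Finset.sum_eq_zero
    intro t ht
    rw [if_neg]
    intro he
    exact hflip_notA t (he ▸ hx₀)
  omega

open Classical in
noncomputable def monoCount {V : Type*} [Fintype V] (H : SimpleGraph V) (f : V → ZMod 3) : ℕ :=
  ((Finset.univ : Finset (V × V)).filter (fun p => H.Adj p.1 p.2 ∧ f p.1 = f p.2)).card

theorem exists_proper {V : Type*} [Fintype V] {H : SimpleGraph V}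
    (NC : ∀ (v : V) (c : H.Walk v v), c.IsCycle → ¬ (3 ∣ c.length)) :
    ∃ f : V → ZMod 3, ∀ v w, H.Adj v w → f v ≠ f w := by
  classical
  -- take a coloring minimizing the number of monochromatic (ordered) edges
  obtain ⟨f₀, hmin⟩ : ∃ f₀ : V → ZMod 3, ∀ g : V → ZMod 3, monoCount H f₀ ≤ monoCount H g := by
    obtain ⟨f₀, _, hf₀⟩ := Finset.exists_min_image (Finset.univ : Finset (V → ZMod 3))
      (monoCount H) ⟨fun _ => 0, Finset.mem_univ _⟩
    exact ⟨f₀, fun g => hf₀ g (Finset.mem_univ g)⟩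
  by_cases h0 : monoCount H f₀ = 0
  · refine ⟨f₀, fun v w hadj he => ?_⟩
    have : (v, w) ∈ (Finset.univ : Finset (V × V)).filter
        (fun p => H.Adj p.1 p.2 ∧ f₀ p.1 = f₀ p.2) :=
      Finset.mem_filter.mpr ⟨Finset.mem_univ _, hadj, he⟩
    rw [monoCount] at h0
    have := Finset.card_eq_zero.mp h0
    simp [this] at *
  · exfalso
    -- there is a monochromatic edge
    obtain ⟨⟨u₀, w₀⟩, hmem⟩ := Finset.card_pos.mp (Nat.pos_of_ne_zero h0)
    rw [Finset.mem_filter] at hmem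
    obtain ⟨-, hadj₀, heq₀⟩ := hmem
    set A : Set V := {v | ∃ w, H.Adj v w ∧ f₀ v = f₀ w} with hAdef
    have hx₀ : u₀ ∈ A := ⟨w₀, hadj₀, heq₀⟩
    have hA : ∀ v w, H.Adj v w → f₀ v = f₀ w → v ∈ A := fun v w h1 h2 => ⟨w, h1, h2⟩
    obtain ⟨g, a, hre, haA, hsink⟩ := run_reaches NC f₀ A u₀ hx₀ hA
    obtain ⟨hagree, hmono⟩ := inv_of_reach hA hre
    -- the mono edges of g are the same pairs as for f₀, hence monoCount g = monoCount f₀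
    have hcount : monoCount H g = monoCount H f₀ := by
      unfold monoCount
      congr 1
      apply Finset.filter_congr
      intro p _
      constructor
      · rintro ⟨h1, h2⟩; exact ⟨h1, (hmono p.1 p.2 h1).mp h2⟩
      · rintro ⟨h1, h2⟩; exact ⟨h1, (hmono p.1 p.2 h1).mpr h2⟩
    -- flipping a strictly decreases the count
    obtain ⟨b, hab, hfab⟩ := haA
    have hgab : g a = g b := (hmono a b hab).mpr hfab
    have hlt : monoCount H (Flip g a) < monoCount H g := by
      apply Finset.card_lt_card
      rw [Finset.ssubset_iff_of_subset]
      · refine ⟨(a, b), ?_, ?_⟩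
        · exact Finset.mem_filter.mpr ⟨Finset.mem_univ _, hab, hgab⟩
        · rw [Finset.mem_filter]
          rintro ⟨-, -, hbad⟩
          have hba : b ≠ a := fun he => H.irrefl (he ▸ hab)
          rw [flip_same, flip_noteq _ _ _ hba] at hbad
          rw [← hgab] at hbad
          exact zmod3_ne0 (g a) hbad
      · intro p hp
        rw [Finset.mem_filter] at hp ⊢
        obtain ⟨-, h1, h2⟩ := hp
        refine ⟨Finset.mem_univ _, h1, ?_⟩
        by_cases hva : p.1 = a
        · exfalso
          have hwa : p.2 ≠ a := fun he => H.irrefl (by rw [hva, he] at h1; exact h1)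
          rw [hva, flip_same, flip_noteq _ _ _ hwa] at h2
          exact hsink p.2 (hva ▸ h1) h2.symm
        · by_cases hwa : p.2 = a
          · exfalso
            rw [hwa, flip_same, flip_noteq _ _ _ hva] at h2
            exact hsink p.1 (hwa ▸ h1).symm h2
          · rwa [flip_noteq _ _ _ hva, flip_noteq _ _ _ hwa] at h2
    rw [hcount] at hlt
    exact absurd (hmin (Flip g a)) (by omega)

theorem exists_proper_ne {V : Type*} [Fintype V] {H : SimpleGraph V}
    (NC : ∀ (v : V) (c : H.Walk v v), c.IsCycle → ¬ (3 ∣ c.length))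
    {x y : V} (hxy : x ≠ y) :
    ∃ f : V → ZMod 3, (∀ v w, H.Adj v w → f v ≠ f w) ∧ f x ≠ f y := by
  classical
  obtain ⟨f, hf⟩ := exists_proper NC
  by_cases hne : f x ≠ f y
  · exact ⟨f, hf, hne⟩
  push_neg at hne
  by_cases hr : H.Reachable x y
  · -- run the sink-flipping process with A = {x, y}
    set A : Set V := {x, y} with hAdef
    have hA : ∀ v w, H.Adj v w → f v = f w → v ∈ A := fun v w h1 h2 => absurd h2 (hf v w h1)
    obtain ⟨g, a, hre, haA, hsink⟩ := run_reaches NC f A x (Or.inl rfl) hA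
    obtain ⟨hagree, hmono⟩ := inv_of_reach hA hre
    have hgproper : ∀ v w, H.Adj v w → g v ≠ g w :=
      fun v w h1 h2 => hf v w h1 ((hmono v w h1).mp h2)
    have hgx : g x = f x := hagree x (Or.inl (Or.inl rfl))
    have hgy : g y = f y := hagree y (Or.inl (Or.inr rfl))
    -- flip a; the new coloring is proper and distinguishes x and y
    have hflipproper : ∀ v w, H.Adj v w → Flip g a v ≠ Flip g a w := by
      intro v w h1
      by_cases hva : v = a
      · have hwa : w ≠ a := fun he => H.irrefl (by rw [hva, he] at h1; exact h1)
        rw [hva, flip_same, flip_noteq _ _ _ hwa]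
        exact fun he => hsink w (hva ▸ h1) he.symm
      · by_cases hwa : w = a
        · rw [hwa, flip_same, flip_noteq _ _ _ hva]
          exact fun he => hsink v (hwa ▸ h1).symm he
        · rw [flip_noteq _ _ _ hva, flip_noteq _ _ _ hwa]
          exact hgproper v w h1
    rcases haA with hax | hay
    · -- a = x
      subst hax
      refine ⟨Flip g a, hflipproper, ?_⟩
      rw [flip_same, flip_noteq _ _ _ (Ne.symm hxy)]
      have hgyx : g y = g a := by rw [hgy, ← hne, ← hgx]
      rw [hgyx]
      exact zmod3_ne0 (g a)
    · -- a = y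
      have hay' : a = y := hay
      subst hay'
      refine ⟨Flip g a, hflipproper, ?_⟩
      rw [flip_noteq _ _ _ hxy, flip_same]
      have hgxy' : g x = g a := by rw [hgx, hne, ← hgy]
      rw [hgxy']
      exact fun he => zmod3_ne0 (g a) he.symm
  · -- different components: shift the component of x
    refine ⟨fun v => if H.Reachable x v then f v + 1 else f v, ?_, ?_⟩
    · intro v w h1
      have hiff : H.Reachable x v ↔ H.Reachable x w :=
        ⟨fun h2 => h2.trans h1.reachable, fun h2 => h2.trans h1.symm.reachable⟩
      show (if H.Reachable x v then f v + 1 else f v) ≠ (if H.Reachable x w then f w + 1 else f w)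
      by_cases h2 : H.Reachable x v
      · rw [if_pos h2, if_pos (hiff.mp h2)]
        exact fun he => hf v w h1 (by exact add_right_cancel he)
      · rw [if_neg h2, if_neg (fun h3 => h2 (hiff.mpr h3))]
        exact hf v w h1
    · show (if H.Reachable x x then f x + 1 else f x) ≠ (if H.Reachable x y then f y + 1 else f y)
      rw [if_pos (SimpleGraph.Reachable.refl x), if_neg hr, hne]
      exact zmod3_ne0 (f y)

end Stmt16Aux

/-- If a graph `G` contains an edge `e` such that `G - e` has no cycle of length
divisible by 3, then `G` is 3-colourable. -/
theorem stmt16 {V : Type*} (G : SimpleGraph V) (e : Sym2 V) (he : e ∈ G.edgeSet)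
    (h : ∀ (v : V) (c : (G.deleteEdges {e}).Walk v v), c.IsCycle → ¬ (3 ∣ c.length)) :
    G.Colorable 3 := by
  classical
  revert he h
  induction e using Sym2.ind with
  | _ x y =>
  intro he h
  have hadj : G.Adj x y := G.mem_edgeSet.mp he
  have hxy : x ≠ y := hadj.ne
  set D := G.deleteEdges {s(x, y)} with hD
  -- for each finite set S, a coloring proper on S ∪ {x,y} and separating x from y
  have hfin : ∀ S : Finset V, ∃ fS : V → ZMod 3,
      (∀ v w, D.Adj v w → v ∈ insert x (insert y S) → w ∈ insert x (insert y S) → fS v ≠ fS w) ∧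
      fS x ≠ fS y := by
    intro S
    set S' : Finset V := insert x (insert y S) with hS'
    have hxS : x ∈ S' := Finset.mem_insert_self _ _
    have hyS : y ∈ S' := Finset.mem_insert_of_mem (Finset.mem_insert_self _ _)
    set DS := D.induce ((S' : Set V)) with hDS
    have NCS : ∀ (v : (S' : Set V)) (c : DS.Walk v v), c.IsCycle → ¬ (3 ∣ c.length) := by
      intro v c hc hdvd
      let homi : DS →g D := ⟨Subtype.val, fun {a b} hab => by
        rw [hDS, SimpleGraph.comap_adj] at hab; exact hab⟩
      have hinj : Function.Injective homi := Subtype.val_injective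
      have hc' : ((c.map homi).IsCycle) :=
        (SimpleGraph.Walk.map_isCycle_iff_of_injective hinj).mpr hc
      apply h v.1 (c.map homi) hc'
      rwa [SimpleGraph.Walk.length_map]
    have hx'y' : (⟨x, hxS⟩ : (S' : Set V)) ≠ ⟨y, hyS⟩ := by
      intro hcon
      exact hxy (congrArg Subtype.val hcon)
    obtain ⟨f', hf'1, hf'2⟩ := Stmt16Aux.exists_proper_ne NCS hx'y'
    refine ⟨fun v => if hv : v ∈ S' then f' ⟨v, hv⟩ else 0, ?_, ?_⟩
    · intro v w hvw hv hw
      simp only [dif_pos hv, dif_pos hw]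
      exact hf'1 ⟨v, hv⟩ ⟨w, hw⟩ (by rw [hDS, SimpleGraph.comap_adj]; exact hvw)
    · simp only [dif_pos hxS, dif_pos hyS]
      exact hf'2
  choose colr hcolr1 hcolr2 using hfin
  -- ultrafilter limit
  have hNB : (Filter.atTop : Filter (Finset V)).NeBot := Filter.atTop_neBot
  set U : Ultrafilter (Finset V) := Ultrafilter.of Filter.atTop with hUdef
  have hU : ∀ T : Finset V, {S | T ⊆ S} ∈ U := fun T =>
    Ultrafilter.of_le Filter.atTop (Filter.mem_atTop T)
  have hlim : ∀ v : V, ∃ c : ZMod 3, {S | colr S v = c} ∈ U := by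
    intro v
    by_contra hc
    push_neg at hc
    have hcompl : ∀ c : ZMod 3, {S | colr S v = c}ᶜ ∈ U := fun c =>
      (Ultrafilter.compl_mem_iff_notMem).mpr (hc c)
    have hint : ({S | colr S v = 0}ᶜ ∩ ({S | colr S v = 1}ᶜ ∩ {S | colr S v = 2}ᶜ)) ∈ U :=
      Filter.inter_mem (hcompl 0) (Filter.inter_mem (hcompl 1) (hcompl 2))
    obtain ⟨S, hS0, hS1, hS2⟩ := Ultrafilter.nonempty_of_mem hint
    have : ∀ c : ZMod 3, c = 0 ∨ c = 1 ∨ c = 2 := by decide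
    rcases this (colr S v) with h' | h' | h'
    · exact hS0 h'
    · exact hS1 h'
    · exact hS2 h'
  choose F hF using hlim
  have hFxy : F x ≠ F y := by
    have hmem : ({S | colr S x = F x} ∩ {S | colr S y = F y}) ∈ U :=
      Filter.inter_mem (hF x) (hF y)
    obtain ⟨S, hSx, hSy⟩ := Ultrafilter.nonempty_of_mem hmem
    intro hcon
    have hSx' : colr S x = F x := hSx
    have hSy' : colr S y = F y := hSy
    exact hcolr2 S (by rw [hSx', hSy', hcon])
  have hproper : ∀ v w, G.Adj v w → F v ≠ F w := by
    intro v w hvw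
    by_cases he' : s(v, w) = s(x, y)
    · rw [Sym2.eq_iff] at he'
      rcases he' with ⟨rfl, rfl⟩ | ⟨rfl, rfl⟩
      · exact hFxy
      · exact fun hcon => hFxy hcon.symm
    · have hDvw : D.Adj v w := by
        rw [hD, SimpleGraph.deleteEdges_adj]
        exact ⟨hvw, by simpa using he'⟩
      have hmem : ({S : Finset V | ({v, w} : Finset V) ⊆ S} ∩
          ({S | colr S v = F v} ∩ {S | colr S w = F w})) ∈ U :=
        Filter.inter_mem (hU _) (Filter.inter_mem (hF v) (hF w))
      obtain ⟨S, hSsub, hSv, hSw⟩ := Ultrafilter.nonempty_of_mem hmem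
      have hvS : v ∈ insert x (insert y S) :=
        Finset.mem_insert_of_mem (Finset.mem_insert_of_mem
          (hSsub (Finset.mem_insert_self _ _)))
      have hwS : w ∈ insert x (insert y S) :=
        Finset.mem_insert_of_mem (Finset.mem_insert_of_mem
          (hSsub (Finset.mem_insert_of_mem (Finset.mem_singleton_self _))))
      intro hcon
      have hSv' : colr S v = F v := hSv
      have hSw' : colr S w = F w := hSw
      exact hcolr1 S v w hDvw hvS hwS (by rw [hSv', hSw', hcon])
  have C : G.Coloring (ZMod 3) := SimpleGraph.Coloring.mk F (fun hvw => hproper _ _ hvw)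
  have := C.colorable
  rwa [show Fintype.card (ZMod 3) = 3 from rfl] at this
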